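/- Let (X,r') be a complete separable metric space and m a Borel probability measure on X × ℝ≥0. Let ((x(i),v(i)))_{i∈ℕ} be an i.i.d. sequence with distribution m, set r(i,j) = r'(x(i),x(j)) and ρ(i,j) = (v(i) + r(i,j) + v(j))·1_{i≠j}. Assume ρ is almost surely a semi-ultrametric on ℕ. Then almost surely, for every i, v(i) = (1/2)·inf_{j≠i} ρ(i,j). -/

import Mathlib

open MeasureTheory ProbabilityTheory
open scoped NNReal

/-- Sampling from a marked metric measure space: if `((x(i),v(i)))` is an i.i.d. sequence
with distribution `m` on `X × ℝ≥0`, `ρ(i,j) = (v(i) + r'(x(i),x(j)) + v(j))·1_{i≠j}` is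
a.s. a semi-ultrametric, then a.s. `v(i) = (1/2) inf_{j≠i} ρ(i,j)` for every `i`. -/
theorem stmt4 {X : Type*} [MetricSpace X] [CompleteSpace X]
    [TopologicalSpace.SeparableSpace X] [MeasurableSpace X] [BorelSpace X]
    {Ω : Type*} [MeasurableSpace Ω] (μ : Measure Ω) [IsProbabilityMeasure μ]
    (m : Measure (X × ℝ≥0)) [IsProbabilityMeasure m]
    (Y : ℕ → Ω → X × ℝ≥0)
    (hmeas : ∀ i, Measurable (Y i))
    (hindep : iIndepFun Y μ)
    (hlaw : ∀ i, Measure.map (Y i) μ = m)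
    (ρ : Ω → ℕ → ℕ → ℝ)
    (hρ : ∀ ω i j, ρ ω i j =
      if i = j then 0
      else ((Y i ω).2 : ℝ) + dist (Y i ω).1 (Y j ω).1 + ((Y j ω).2 : ℝ))
    (hultra : ∀ᵐ ω ∂μ, ∀ i j k, ρ ω i j ≤ max (ρ ω i k) (ρ ω k j)) :
    ∀ᵐ ω ∂μ, ∀ i, ((Y i ω).2 : ℝ) = (1 / 2) * ⨅ j : {j : ℕ // j ≠ i}, ρ ω i (j : ℕ) := by
  haveI : SecondCountableTopology X := UniformSpace.secondCountable_of_separable X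
  obtain ⟨B, hBc, -, hBbasis⟩ := TopologicalSpace.exists_countable_basis (X × ℝ≥0)
  -- the law of each Y k on a measurable set
  have hlawset : ∀ (k : ℕ) (U : Set (X × ℝ≥0)), MeasurableSet U → μ (Y k ⁻¹' U) = m U := by
    intro k U hU
    rw [← hlaw k, Measure.map_apply (hmeas k) hU]
  -- key 1 : a.s. every positive-measure basic set is hit infinitely often
  have key1 : ∀ᵐ ω ∂μ, ∀ (U : Set (X × ℝ≥0)) (_ : U ∈ B), ∀ N : ℕ,
      0 < m U → ∃ k, N ≤ k ∧ Y k ω ∈ U := by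
    rw [ae_ball_iff hBc]
    intro U hU
    rw [ae_all_iff]
    intro N
    by_cases hpos : 0 < m U
    · have hUmeas : MeasurableSet U := (hBbasis.isOpen hU).measurableSet
      have hbound : ∀ M : ℕ,
          μ {ω | ¬ ∃ k, N ≤ k ∧ Y k ω ∈ U} ≤ (m Uᶜ) ^ M := by
        intro M
        have hsub : {ω | ¬ ∃ k, N ≤ k ∧ Y k ω ∈ U} ⊆
            ⋂ k ∈ Finset.Ico N (N + M), Y k ⁻¹' Uᶜ := by
          intro ω hω
          simp only [Set.mem_iInter, Finset.mem_Ico]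
          intro k hk
          exact fun h => hω ⟨k, hk.1, h⟩
        refine le_trans (measure_mono hsub) ?_
        have := hindep.measure_inter_preimage_eq_mul (Finset.Ico N (N + M))
          (sets := fun _ => Uᶜ) (fun i _ => hUmeas.compl)
        rw [this]
        have : ∀ k ∈ Finset.Ico N (N + M), μ (Y k ⁻¹' Uᶜ) = m Uᶜ := fun k _ =>
          hlawset k Uᶜ hUmeas.compl
        rw [Finset.prod_congr rfl this, Finset.prod_const, Nat.card_Ico]
        simp
      have hlt : m Uᶜ < 1 := by
        have h1 : m Uᶜ = 1 - m U := by
          rw [measure_compl hUmeas (measure_ne_top m U)]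
          simp [measure_univ]
        rw [h1]
        exact ENNReal.sub_lt_self ENNReal.one_ne_top one_ne_zero hpos.ne'
      have htend : Filter.Tendsto (fun M : ℕ => (m Uᶜ) ^ M) Filter.atTop (nhds 0) :=
        ENNReal.tendsto_pow_atTop_nhds_zero_of_lt_one hlt
      have hzero : μ {ω | ¬ ∃ k, N ≤ k ∧ Y k ω ∈ U} = 0 :=
        le_antisymm (ge_of_tendsto' htend hbound) zero_le
      have hae : ∀ᵐ ω ∂μ, ∃ k, N ≤ k ∧ Y k ω ∈ U := ae_iff.mpr hzero
      filter_upwards [hae] with ω h _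
      exact h
    · filter_upwards with ω h
      exact absurd h hpos
  -- key 2 : a.s. no Y i lands in a null basic set
  have key2 : ∀ᵐ ω ∂μ, ∀ i : ℕ, ∀ (U : Set (X × ℝ≥0)) (_ : U ∈ B),
      m U = 0 → Y i ω ∉ U := by
    rw [ae_all_iff]
    intro i
    rw [ae_ball_iff hBc]
    intro U hU
    by_cases hz : m U = 0
    · have : μ (Y i ⁻¹' U) = 0 := by
        rw [hlawset i U (hBbasis.isOpen hU).measurableSet, hz]
      filter_upwards [measure_eq_zero_iff_ae_notMem.mp this] with ω hω _
      exact hω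
    · filter_upwards with ω h
      exact absurd h hz
  filter_upwards [hultra, key1, key2] with ω hu h1 h2 i
  -- denseness: for every i, N, ε > 0 there is k ≥ N close to Y i ω
  have dense : ∀ (a N : ℕ) (ε : ℝ), 0 < ε → ∃ k, N ≤ k ∧ dist (Y k ω) (Y a ω) < ε := by
    intro a N ε hε
    obtain ⟨U, hUB, hYU, hUsub⟩ := hBbasis.exists_subset_of_mem_open
      (Metric.mem_ball_self hε) (Metric.isOpen_ball (x := Y a ω) (ε := ε))
    have hpos : 0 < m U := by
      rcases (zero_le : 0 ≤ m U).lt_or_eq with h | h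
      · exact h
      · exact absurd hYU (h2 a U hUB h.symm)
    obtain ⟨k, hk, hkU⟩ := h1 U hUB N hpos
    exact ⟨k, hk, hUsub hkU⟩
  -- notation
  set v : ℕ → ℝ := fun a => ((Y a ω).2 : ℝ) with hv
  have hvnn : ∀ a, 0 ≤ v a := fun a => (Y a ω).2.coe_nonneg
  have hρval : ∀ a b, a ≠ b → ρ ω a b = v a + dist (Y a ω).1 (Y b ω).1 + v b := by
    intro a b hab; rw [hρ, if_neg hab]
  have hρnn : ∀ a b, 0 ≤ ρ ω a b := by
    intro a b
    rw [hρ]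
    split
    · exact le_refl 0
    · positivity
  haveI : Nonempty {j : ℕ // j ≠ i} := ⟨⟨i + 1, by omega⟩⟩
  have hbdd : BddBelow (Set.range fun j : {j : ℕ // j ≠ i} => ρ ω i (j : ℕ)) := by
    refine ⟨0, ?_⟩
    rintro x ⟨j, rfl⟩
    exact hρnn i j
  -- closeness consequences
  have hclose : ∀ (a k : ℕ) (ε : ℝ), dist (Y k ω) (Y a ω) < ε →
      dist (Y k ω).1 (Y a ω).1 < ε ∧ |v k - v a| < ε := by
    intro a k ε h
    rw [Prod.dist_eq, sup_lt_iff] at h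
    refine ⟨h.1, ?_⟩
    have := h.2
    rwa [NNReal.dist_eq] at this
  -- upper bound: inf ≤ 2 v i
  have hub : (⨅ j : {j : ℕ // j ≠ i}, ρ ω i (j : ℕ)) ≤ 2 * v i := by
    refine le_of_forall_pos_le_add ?_
    intro ε hε
    obtain ⟨k, hkN, hkd⟩ := dense i (i + 1) (ε / 2) (by positivity)
    have hki : k ≠ i := by omega
    obtain ⟨hd1, hd2⟩ := hclose i k (ε / 2) hkd
    have h3 : ρ ω i k = v i + dist (Y i ω).1 (Y k ω).1 + v k := hρval i k (Ne.symm hki)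
    have h4 : (⨅ j : {j : ℕ // j ≠ i}, ρ ω i (j : ℕ)) ≤ ρ ω i k := ciInf_le hbdd ⟨k, hki⟩
    have h5 : dist (Y i ω).1 (Y k ω).1 < ε / 2 := by rwa [dist_comm] at hd1
    have h6 : v k < v i + ε / 2 := by
      have := abs_lt.mp hd2
      linarith [this.1]
    linarith
  -- lower bound: 2 v i ≤ ρ ω i j for every j ≠ i
  have hlb : ∀ j : ℕ, j ≠ i → 2 * v i ≤ ρ ω i j := by
    intro j hj
    refine le_of_forall_pos_le_add ?_
    intro ε hε
    obtain ⟨k, hkN, hkd⟩ := dense i (max i j + 1) (ε / 3) (by positivity)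
    have hki : k ≠ i := by omega
    have hkj : k ≠ j := by omega
    obtain ⟨hd1, hd2⟩ := hclose i k (ε / 3) hkd
    have habs := abs_lt.mp hd2
    have hik : ρ ω i k = v i + dist (Y i ω).1 (Y k ω).1 + v k := hρval i k (Ne.symm hki)
    have hjk : ρ ω j k = v j + dist (Y j ω).1 (Y k ω).1 + v k := hρval j k (Ne.symm hkj)
    have hij : ρ ω i j = v i + dist (Y i ω).1 (Y j ω).1 + v j := hρval i j (Ne.symm hj)
    have htri : dist (Y j ω).1 (Y k ω).1 ≤ dist (Y j ω).1 (Y i ω).1 + dist (Y i ω).1 (Y k ω).1 :=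
      dist_triangle _ _ _
    have hd1' : dist (Y i ω).1 (Y k ω).1 < ε / 3 := by rwa [dist_comm] at hd1
    have hcomm : dist (Y j ω).1 (Y i ω).1 = dist (Y i ω).1 (Y j ω).1 := dist_comm _ _
    -- ultrametric: ρ i k ≤ max (ρ i j) (ρ j k)
    have hmax := hu i k j
    have hjk_le : ρ ω j k ≤ ρ ω i j + 2 * (ε / 3) := by
      rw [hjk, hij]
      linarith [habs.2]
    have hik_ge : 2 * v i - ε / 3 ≤ ρ ω i k := by
      rw [hik]
      have := habs.1
      linarith [dist_nonneg (x := (Y i ω).1) (y := (Y k ω).1)]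
    have : ρ ω i k ≤ ρ ω i j + 2 * (ε / 3) :=
      hmax.trans (max_le (by linarith [hρnn i j]) hjk_le)
    linarith
  have hinf : (⨅ j : {j : ℕ // j ≠ i}, ρ ω i (j : ℕ)) = 2 * v i := by
    refine le_antisymm hub (le_ciInf fun j => hlb j j.2)
  rw [hinf]
  ring
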